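/- arXiv:2605.16195 — 7 statements merged into one kernel-verified Lean document; each statement's English description precedes it below -/
import Mathlib

section
/- Let B be an L·N × L·N complex block matrix with blocks B_{mn} ∈ ℂ^{N×N}, and let C ∈ ℂ^{L×L} be the matrix with entries C_{mn} = ‖B_{mn}‖ (spectral norms of the blocks). Then the spectral norm of B is at most the spectral norm of C: ‖B‖ ≤ ‖C‖. -/
open scoped Matrix.Norms.L2Operator
open Matrix

/-- **Spectral norm bound for block matrices.**
If `B` is an `L·N × L·N` complex block matrix with blocks `B m n : ℂ^{N×N}` and
`C` is the `L × L` real matrix with entries `C m n = ‖B m n‖` (spectral norms of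
the blocks), then the spectral norm of the block matrix is at most `‖C‖`. -/
theorem block_matrix_spectral_norm_le
    (L N : ℕ) (B : Fin L → Fin L → Matrix (Fin N) (Fin N) ℂ)
    (C : Matrix (Fin L) (Fin L) ℝ) (hC : ∀ m n, C m n = ‖B m n‖) :
    ‖Matrix.of (fun (p q : Fin L × Fin N) => B p.1 q.1 p.2 q.2)‖ ≤ ‖C‖ := by
  classical
  set A : Matrix (Fin L × Fin N) (Fin L × Fin N) ℂ :=
    Matrix.of (fun (p q : Fin L × Fin N) => B p.1 q.1 p.2 q.2) with hA
  rw [Matrix.l2_opNorm_def]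
  refine ContinuousLinearMap.opNorm_le_bound _ (norm_nonneg C) ?_
  intro x
  set xv : Fin L → EuclideanSpace ℂ (Fin N) := fun n => WithLp.toLp 2 (fun j => x (n, j)) with hxv
  set ξ : EuclideanSpace ℝ (Fin L) := WithLp.toLp 2 (fun n => ‖xv n‖) with hξdef
  have hξ : ‖ξ‖ = ‖x‖ := by
    rw [EuclideanSpace.norm_eq, EuclideanSpace.norm_eq]
    congr 1
    rw [Fintype.sum_prod_type]
    refine Finset.sum_congr rfl fun n _ => ?_
    have h1 : ‖ξ n‖ ^ 2 = ‖xv n‖ ^ 2 := by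
      simp [hξdef, Real.norm_eq_abs, sq_abs]
    rw [h1, EuclideanSpace.norm_eq, Real.sq_sqrt (by positivity)]
  set v : Fin L × Fin N → ℂ := A *ᵥ (fun q => x q) with hv
  set T := (Matrix.toEuclideanLin.trans LinearMap.toContinuousLinearMap) A with hT
  have hTx : ∀ p, (T x) p = v p := fun p => rfl
  -- rows
  set y : Fin L → EuclideanSpace ℂ (Fin N) :=
    fun m => (WithLp.linearEquiv 2 ℂ (Fin N → ℂ)).symm (fun i => v (m, i)) with hy
  have hpi : ∀ m, (fun i => v (m, i)) = ∑ n, ((B m n) *ᵥ (fun j => xv n j)) := by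
    intro m
    funext i
    rw [Finset.sum_apply]
    simp only [hv, Matrix.mulVec, dotProduct, hA, Matrix.of_apply]
    rw [Fintype.sum_prod_type]
  have hrow : ∀ m, ‖y m‖ ≤ ∑ n, C m n * ξ n := by
    intro m
    rw [hy]
    simp only [hpi m]
    rw [map_sum]
    refine le_trans (norm_sum_le _ _) (Finset.sum_le_sum fun n _ => ?_)
    rw [hC m n]
    exact Matrix.l2_opNorm_mulVec (B m n) (xv n)
  set ζ : EuclideanSpace ℝ (Fin L) :=
    (WithLp.linearEquiv 2 ℝ (Fin L → ℝ)).symm (C *ᵥ (fun n => ξ n)) with hζ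
  have hζm : ∀ m, ζ m = ∑ n, C m n * ξ n := fun m => rfl
  have hζnorm : ‖ζ‖ ≤ ‖C‖ * ‖ξ‖ := Matrix.l2_opNorm_mulVec C ξ
  have hζmnonneg : ∀ m, 0 ≤ ζ m := by
    intro m
    rw [hζm m]
    refine Finset.sum_nonneg fun n _ => mul_nonneg ?_ ?_
    · rw [hC m n]; exact norm_nonneg _
    · exact norm_nonneg _
  calc ‖T x‖ = Real.sqrt (∑ m, ∑ i, ‖v (m, i)‖ ^ 2) := by
        rw [EuclideanSpace.norm_eq, Fintype.sum_prod_type]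
        congr 1
    _ ≤ Real.sqrt (∑ m, (ζ m) ^ 2) := by
        apply Real.sqrt_le_sqrt
        refine Finset.sum_le_sum fun m _ => ?_
        have hym : ‖y m‖ ^ 2 = ∑ i, ‖v (m, i)‖ ^ 2 := by
          rw [EuclideanSpace.norm_eq, Real.sq_sqrt (by positivity)]
          rfl
        rw [← hym]
        exact pow_le_pow_left₀ (norm_nonneg _) (le_trans (hrow m) (le_of_eq (hζm m).symm)) 2
    _ = ‖ζ‖ := by
        rw [EuclideanSpace.norm_eq]
        congr 1
        exact Finset.sum_congr rfl fun m _ => by rw [Real.norm_eq_abs, sq_abs]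
    _ ≤ ‖C‖ * ‖ξ‖ := hζnorm
    _ = ‖C‖ * ‖x‖ := by rw [hξ]
end

section
/- Let A ∈ ℂ^{N×N} with ‖A‖ ≤ a for some a > 0, let t ≥ 0, M = ⌈ta⌉, and x ∈ ℂ^N. Then Σ_{m=0}^{M−1} ‖e^{(tm/M)A} x‖² ≤ e² (M/t) ∫₀ᵗ ‖e^{sA} x‖² ds (for t > 0). -/
set_option maxHeartbeats 1000000


open scoped Matrix.Norms.L2Operator
open NormedSpace Matrix

lemma norm_exp_le_exp_norm_aux {𝔸 : Type*} [NormedRing 𝔸] [NormedAlgebra ℂ 𝔸]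
    [CompleteSpace 𝔸] (h1 : ‖(1 : 𝔸)‖ ≤ 1) (x : 𝔸) : ‖exp x‖ ≤ Real.exp ‖x‖ := by
  rw [exp_eq_tsum ℂ, Real.exp_eq_exp_ℝ, exp_eq_tsum ℝ]
  refine (norm_tsum_le_tsum_norm (norm_expSeries_summable' (𝕂 := ℂ) x)).trans ?_
  refine Summable.tsum_le_tsum ?_ (norm_expSeries_summable' (𝕂 := ℂ) x)
    (norm_expSeries_summable' (𝕂 := ℝ) ‖x‖).of_norm
  intro n
  rw [norm_smul, smul_eq_mul]
  have hxn : ‖x ^ n‖ ≤ ‖x‖ ^ n := by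
    cases n with
    | zero => simpa using h1
    | succ k => exact norm_pow_le' x k.succ_pos
  have : ‖((n.factorial : ℂ))⁻¹‖ = ((n.factorial : ℝ))⁻¹ := by
    rw [norm_inv]
    norm_cast
  rw [this]
  exact mul_le_mul_of_nonneg_left hxn (by positivity)

/-- **Norm of the history state.**
For `A ∈ ℂ^{N×N}` with `‖A‖ ≤ a`, `a > 0`, `t > 0`, `M = ⌈t·a⌉`, and a vector
`x ∈ ℂ^N` (viewed as a column matrix, so that the spectral norm is its Euclidean
norm), we have `Σ_{m=0}^{M−1} ‖e^{(tm/M)A} x‖² ≤ e² (M/t) ∫₀ᵗ ‖e^{sA} x‖² ds`. -/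
theorem history_state_norm_bound
    (N : ℕ) (A : Matrix (Fin N) (Fin N) ℂ) (a t : ℝ)
    (ha : 0 < a) (hA : ‖A‖ ≤ a) (ht : 0 < t)
    (M : ℕ) (hM : M = ⌈t * a⌉₊)
    (x : Matrix (Fin N) (Fin 1) ℂ) :
    ∑ m ∈ Finset.range M, ‖exp ((t * m / M) • A) * x‖ ^ 2 ≤
      Real.exp 1 ^ 2 * (M / t) * ∫ s in (0:ℝ)..t, ‖exp (s • A) * x‖ ^ 2 := by
  have hM0 : 0 < M := by
    rw [hM]; exact Nat.ceil_pos.mpr (mul_pos ht ha)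
  have hMr : (0:ℝ) < M := Nat.cast_pos.mpr hM0
  have htM : (0:ℝ) < t / M := div_pos ht hMr
  have hta : t * a ≤ M := by rw [hM]; exact Nat.le_ceil _
  have hone : ‖(1 : Matrix (Fin N) (Fin N) ℂ)‖ ≤ 1 := by
    rcases Nat.eq_zero_or_pos N with h | h
    · subst h
      rw [Subsingleton.elim (1 : Matrix (Fin 0) (Fin 0) ℂ) 0, norm_zero]
      norm_num
    · haveI : Nonempty (Fin N) := ⟨⟨0, h⟩⟩
      rw [norm_one]
  set f : ℝ → ℝ := fun s => ‖exp (s • A) * x‖ ^ 2 with hf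
  have hsA : Continuous fun s : ℝ => s • A := continuous_id.smul continuous_const
  have hexp : Continuous fun s : ℝ => exp (s • A) :=
    letI : NormedAlgebra ℚ (Matrix (Fin N) (Fin N) ℂ) := NormedAlgebra.restrictScalars ℚ ℂ _
    (exp_continuous (𝔸 := Matrix (Fin N) (Fin N) ℂ)).comp hsA
  have hcont : Continuous f := ((hexp.matrix_mul continuous_const).norm).pow 2
  have key : ∀ c s : ℝ, c ≤ s → s ≤ c + t / M → f c ≤ Real.exp 1 ^ 2 * f s := by
    intro c s hcs hsc
    have hcomm : Commute ((c - s) • A) (s • A) :=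
      ((Commute.refl A).smul_left _).smul_right _
    have hsplit : exp (c • A) = exp ((c - s) • A) * exp (s • A) := by
      rw [← exp_add_of_commute _ _ hcomm, ← add_smul]
      norm_num
    have h1 : ‖exp (c • A) * x‖ ≤ ‖exp ((c - s) • A)‖ * ‖exp (s • A) * x‖ := by
      rw [hsplit, Matrix.mul_assoc]
      exact Matrix.l2_opNorm_mul _ _
    have h2 : ‖exp ((c - s) • A)‖ ≤ Real.exp 1 := by
      refine (norm_exp_le_exp_norm_aux hone _).trans (Real.exp_le_exp.mpr ?_)
      rw [norm_smul]
      calc ‖c - s‖ * ‖A‖ ≤ (t / M) * a := by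
            refine mul_le_mul ?_ hA (norm_nonneg _) (le_of_lt htM)
            rw [Real.norm_eq_abs, abs_sub_comm, abs_of_nonneg (by linarith)]
            linarith
        _ ≤ 1 := by
            rw [div_mul_eq_mul_div, div_le_one hMr]
            linarith
    calc f c ≤ (Real.exp 1 * ‖exp (s • A) * x‖) ^ 2 := by
          refine pow_le_pow_left₀ (norm_nonneg _) ?_ 2
          exact h1.trans (mul_le_mul_of_nonneg_right h2 (norm_nonneg _))
      _ = Real.exp 1 ^ 2 * f s := by rw [mul_pow]
  have habs : ∀ u v : ℝ, IntervalIntegrable f MeasureTheory.volume u v :=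
    fun u v => hcont.intervalIntegrable u v
  have step : ∀ m ∈ Finset.range M,
      f (t * m / M) * (t / M) ≤
        Real.exp 1 ^ 2 * ∫ s in (t * m / M)..(t * (m + 1) / M), f s := by
    intro m _
    set c : ℝ := t * m / M with hc
    have hcc : t * ((m : ℝ) + 1) / M = c + t / M := by
      rw [hc, mul_add, mul_one, add_div]
    have hmono : ∫ _ in c..(c + t / M), f c ≤ ∫ s in c..(c + t / M), Real.exp 1 ^ 2 * f s := by
      refine intervalIntegral.integral_mono_on (by linarith)
        intervalIntegrable_const ((continuous_const.mul hcont).intervalIntegrable _ _) ?_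
      intro s hs
      exact key c s hs.1 hs.2
    rw [intervalIntegral.integral_const, add_sub_cancel_left, smul_eq_mul, mul_comm] at hmono
    rw [intervalIntegral.integral_const_mul] at hmono
    rw [hcc]
    exact hmono
  have hsum : ∑ m ∈ Finset.range M, ∫ s in (t * m / M)..(t * (m + 1) / M), f s
      = ∫ s in (0:ℝ)..t, f s := by
    have h := intervalIntegral.sum_integral_adjacent_intervals
      (a := fun m : ℕ => t * m / M) (μ := MeasureTheory.volume) (f := f)
      (n := M) (fun k _ => habs _ _)
    have hMM : t * (M : ℝ) / M = t := by field_simp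
    simp only [Nat.cast_zero, mul_zero, zero_div, hMM] at h
    rw [← h]
    refine Finset.sum_congr rfl fun m _ => ?_
    push_cast
    rfl
  have hfinal : (∑ m ∈ Finset.range M, f (t * m / M)) * (t / M)
      ≤ Real.exp 1 ^ 2 * ∫ s in (0:ℝ)..t, f s := by
    rw [Finset.sum_mul, ← hsum, Finset.mul_sum]
    exact Finset.sum_le_sum step
  calc ∑ m ∈ Finset.range M, f (t * m / M)
      = (∑ m ∈ Finset.range M, f (t * m / M)) * (t / M) * (M / t) := by
        field_simp
    _ ≤ (Real.exp 1 ^ 2 * ∫ s in (0:ℝ)..t, f s) * (M / t) :=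
        mul_le_mul_of_nonneg_right hfinal (by positivity)
    _ = Real.exp 1 ^ 2 * (M / t) * ∫ s in (0:ℝ)..t, f s := by ring
end

section
/- Let A ∈ ℂ^{N×N} with ‖A‖ ≤ a, t > 0, M a positive integer with M ≥ ta (so that h = t/M satisfies ah ≤ 1). Then Σ_{m=1}^{M} ‖e^{mhA}‖ ≤ (e/h) ∫₀ᵗ ‖e^{sA}‖ ds. -/
open scoped Matrix.Norms.L2Operator
open NormedSpace Matrix

/-- **Sum of norms of matrix exponentials bounded by an integral.**
For `A ∈ ℂ^{N×N}` with `‖A‖ ≤ a`, `t > 0` and a positive integer `M ≥ t·a`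
(so `h = t/M` satisfies `a·h ≤ 1`), we have
`Σ_{m=1}^{M} ‖e^{mhA}‖ ≤ (e/h) ∫₀ᵗ ‖e^{sA}‖ ds`. -/
theorem sum_exp_norm_le_integral
    (N : ℕ) (A : Matrix (Fin N) (Fin N) ℂ) (a t : ℝ)
    (hA : ‖A‖ ≤ a) (ht : 0 < t)
    (M : ℕ) (hM : 0 < M) (hMta : t * a ≤ M) (h : ℝ) (hh : h = t / M) :
    ∑ m ∈ Finset.Icc 1 M, ‖exp ((m * h) • A)‖ ≤
      (Real.exp 1 / h) * ∫ s in (0:ℝ)..t, ‖exp (s • A)‖ := by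
  have hexp : ∀ x : Matrix (Fin N) (Fin N) ℂ, ‖exp x‖ ≤ Real.exp ‖x‖ := by
    have hone : ‖(1 : Matrix (Fin N) (Fin N) ℂ)‖ ≤ 1 := by
      rw [Matrix.cstar_norm_def, _root_.map_one]
      exact ContinuousLinearMap.norm_id_le
    intro x
    rw [exp_eq_tsum ℂ]
    refine le_trans (norm_tsum_le_tsum_norm (norm_expSeries_summable' x)) ?_
    rw [Real.exp_eq_exp_ℝ, exp_eq_tsum_div]
    refine Summable.tsum_le_tsum ?_ (norm_expSeries_summable' x)
      (Real.summable_pow_div_factorial ‖x‖)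
    intro n
    rw [norm_smul]
    match n with
    | 0 => simpa using hone
    | (n+1) =>
      have h1 : ‖x ^ (n+1)‖ ≤ ‖x‖ ^ (n+1) := norm_pow_le' x n.succ_pos
      have h2 : ‖(((n+1).factorial : ℂ))⁻¹‖ = (((n+1).factorial : ℝ))⁻¹ := by
        rw [norm_inv]; norm_num
      rw [h2, div_eq_inv_mul]
      exact mul_le_mul_of_nonneg_left h1 (by positivity)
  have hM0 : (0:ℝ) < M := by exact_mod_cast hM
  have hh0 : 0 < h := by rw [hh]; positivity
  have ha0 : 0 ≤ a := le_trans (norm_nonneg A) hA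
  have hah : a * h ≤ 1 := by
    rw [hh, mul_div_assoc']
    rw [div_le_one hM0, mul_comm]
    exact hMta
  have hMh : (M:ℝ) * h = t := by
    rw [hh]; field_simp
  have hcont : Continuous fun s : ℝ => ‖exp (s • A)‖ :=
    ((continuous_iff_continuousAt.2 fun x => (exp_analytic (𝕂 := ℂ) x).continuousAt).comp (continuous_id.smul continuous_const)).norm
  have hint : ∀ u v : ℝ, IntervalIntegrable (fun s => ‖exp (s • A)‖)
      MeasureTheory.volume u v := fun u v => hcont.intervalIntegrable u v
  -- key pointwise bound
  have key : ∀ m : ℕ, h * ‖exp (((m+1 : ℕ) * h) • A)‖ ≤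
      ∫ s in ((m:ℝ)*h)..(((m:ℝ)+1)*h), Real.exp 1 * ‖exp (s • A)‖ := by
    intro m
    have hle : (m:ℝ)*h ≤ ((m:ℝ)+1)*h := by nlinarith
    have hbound : ∀ s ∈ Set.Icc ((m:ℝ)*h) (((m:ℝ)+1)*h),
        ‖exp ((((m:ℝ)+1) * h) • A)‖ ≤ Real.exp 1 * ‖exp (s • A)‖ := by
      intro s hs
      obtain ⟨hs1, hs2⟩ := hs
      set c : ℝ := ((m:ℝ)+1)*h - s with hc
      have hcomm : Commute (s • A) (c • A) :=
        ((Commute.refl A).smul_left _).smul_right _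
      have hsplit : exp ((((m:ℝ)+1) * h) • A)
          = exp (s • A) * exp (c • A) := by
        rw [← Matrix.exp_add_of_commute _ _ hcomm, ← add_smul, hc]
        ring_nf
      rw [hsplit]
      calc ‖exp (s • A) * exp (c • A)‖
          ≤ ‖exp (s • A)‖ * ‖exp (c • A)‖ := norm_mul_le _ _
        _ ≤ ‖exp (s • A)‖ * Real.exp 1 := by
            refine mul_le_mul_of_nonneg_left ?_ (norm_nonneg _)
            refine le_trans (hexp _) (Real.exp_le_exp.mpr ?_)
            rw [norm_smul, Real.norm_eq_abs]
            have habs : |c| ≤ h := by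
              rw [abs_le, hc]; constructor <;> nlinarith
            nlinarith [mul_le_mul habs hA (norm_nonneg A) hh0.le,
              abs_nonneg c, norm_nonneg A]
        _ = Real.exp 1 * ‖exp (s • A)‖ := mul_comm _ _
    calc h * ‖exp (((m+1 : ℕ) * h) • A)‖
        = ∫ _ in ((m:ℝ)*h)..(((m:ℝ)+1)*h), ‖exp ((((m:ℝ)+1) * h) • A)‖ := by
          rw [intervalIntegral.integral_const, smul_eq_mul]
          push_cast
          ring_nf
      _ ≤ ∫ s in ((m:ℝ)*h)..(((m:ℝ)+1)*h), Real.exp 1 * ‖exp (s • A)‖ := by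
          refine intervalIntegral.integral_mono_on hle intervalIntegrable_const
            (((hint _ _).const_mul _)) hbound
  -- put it together
  rw [div_mul_eq_mul_div, le_div_iff₀ hh0]
  have hsum : (∑ m ∈ Finset.Icc 1 M, ‖exp ((m * h) • A)‖) * h
      = ∑ m ∈ Finset.range M, h * ‖exp (((m+1 : ℕ) * h) • A)‖ := by
    rw [Finset.sum_mul, ← Finset.Ico_add_one_right_eq_Icc, Finset.sum_Ico_eq_sum_range]
    simp [mul_comm, add_comm]
  rw [hsum]
  calc ∑ m ∈ Finset.range M, h * ‖exp (((m+1 : ℕ) * h) • A)‖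
      ≤ ∑ m ∈ Finset.range M,
          ∫ s in ((m:ℝ)*h)..(((m:ℝ)+1)*h), Real.exp 1 * ‖exp (s • A)‖ :=
        Finset.sum_le_sum fun m _ => key m
    _ = ∫ s in (0:ℝ)..((M:ℝ)*h), Real.exp 1 * ‖exp (s • A)‖ := by
        have := intervalIntegral.sum_integral_adjacent_intervals
          (a := fun k : ℕ => (k:ℝ)*h) (n := M)
          (f := fun s => Real.exp 1 * ‖exp (s • A)‖)
          (fun k _ => ((hint _ _).const_mul _))
        push_cast at this
        simpa using this
    _ = Real.exp 1 * ∫ s in (0:ℝ)..t, ‖exp (s • A)‖ := by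
        rw [hMh, intervalIntegral.integral_const_mul]
end

section
/- Let A ∈ ℂ^{N×N}, h > 0 with ‖A‖h ≤ 1, and let V = Σ_{k=0}^{K} (hA)^k/k! be the order-K Taylor truncation of e^{hA}. Then for every positive integer m, ‖V^m − e^{mhA}‖ ≤ 2e·m·e^{m‖δ‖}·max_{s∈[0,mh]}‖e^{sA}‖·‖δ‖, where δ = V − e^{hA} satisfies ‖δ‖ ≤ e/(K+1)!. -/
open scoped Matrix.Norms.L2Operator
open NormedSpace Matrix

set_option maxHeartbeats 1000000

/-- **Error bound for powers of a truncated Taylor series of the matrix exponential.**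
Let `A ∈ ℂ^{N×N}`, `h > 0` with `‖A‖·h ≤ 1`, and `V = Σ_{k=0}^{K} (hA)^k/k!` the
order-`K` Taylor truncation of `e^{hA}`, with remainder `δ = V − e^{hA}`.  Then
`‖δ‖ ≤ e/(K+1)!`, and for every positive integer `m`,
`‖V^m − e^{mhA}‖ ≤ 2e·m·e^{m‖δ‖}·(max_{s∈[0,mh]} ‖e^{sA}‖)·‖δ‖`. -/
theorem truncated_taylor_power_error
    (N : ℕ) (A : Matrix (Fin N) (Fin N) ℂ) (h : ℝ) (hh : 0 < h)
    (hAh : ‖A‖ * h ≤ 1) (K : ℕ)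
    (V δ : Matrix (Fin N) (Fin N) ℂ)
    (hV : V = ∑ k ∈ Finset.range (K + 1), ((k.factorial : ℂ))⁻¹ • (h • A) ^ k)
    (hδ : δ = V - exp (h • A)) :
    ‖δ‖ ≤ Real.exp 1 / (K + 1).factorial ∧
      ∀ m : ℕ, 0 < m →
        ‖V ^ m - exp ((m * h) • A)‖ ≤
          2 * Real.exp 1 * m * Real.exp (m * ‖δ‖) *
            sSup ((fun s => ‖exp (s • A)‖) '' Set.Icc 0 (m * h)) * ‖δ‖ := by
  have hA1 : ‖h • A‖ ≤ 1 := by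
    rw [norm_smul, Real.norm_eq_abs, abs_of_pos hh, mul_comm]; exact hAh
  -- the exponential series for `h • A`
  set f : ℕ → Matrix (Fin N) (Fin N) ℂ :=
    fun n => ((n.factorial : ℂ))⁻¹ • (h • A) ^ n with hf
  have hsum : Summable f := NormedSpace.expSeries_summable' (𝕂 := ℂ) (h • A)
  have hδeq : δ = -∑' n : ℕ, f (n + (K + 1)) := by
    have hsplit := hsum.sum_add_tsum_nat_add (K + 1)
    rw [hδ, hV]
    simp only [exp_eq_tsum ℂ]
    rw [← hsplit]
    abel
  -- the series of `1/n!` sums to `e`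
  have hexp1 : Real.exp 1 = ∑' n : ℕ, ((n.factorial : ℝ))⁻¹ := by
    rw [Real.exp_eq_exp_ℝ, exp_eq_tsum_div]
    simp [one_div]
  have hfac : ∀ n : ℕ, ((n + (K + 1)).factorial : ℝ)⁻¹ ≤
      (((K + 1).factorial : ℝ))⁻¹ * ((n.factorial : ℝ))⁻¹ := by
    intro n
    rw [← mul_inv]
    apply inv_anti₀
    · positivity
    · have := Nat.factorial_mul_factorial_dvd_factorial_add (K + 1) n
      have hle : (K + 1).factorial * n.factorial ≤ (K + 1 + n).factorial :=
        Nat.le_of_dvd (Nat.factorial_pos _) this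
      rw [add_comm (K + 1) n] at hle
      exact_mod_cast hle
  have hnormf : ∀ n : ℕ, ‖f (n + (K + 1))‖ ≤
      (((K + 1).factorial : ℝ))⁻¹ * ((n.factorial : ℝ))⁻¹ := by
    intro n
    have h1 : ‖f (n + (K + 1))‖ ≤ ((n + (K + 1)).factorial : ℝ)⁻¹ := by
      rw [hf, norm_smul]
      have hn : ‖((((n + (K + 1)).factorial : ℕ) : ℂ))⁻¹‖ =
          (((n + (K + 1)).factorial : ℕ) : ℝ)⁻¹ := by
        rw [norm_inv, Complex.norm_natCast]
      rw [hn]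
      have hp : ‖(h • A) ^ (n + (K + 1))‖ ≤ 1 := by
        calc ‖(h • A) ^ (n + (K + 1))‖ ≤ ‖h • A‖ ^ (n + (K + 1)) :=
              norm_pow_le' _ (Nat.succ_pos _)
          _ ≤ 1 := pow_le_one₀ (norm_nonneg _) hA1
      calc (((n + (K + 1)).factorial : ℕ) : ℝ)⁻¹ * ‖(h • A) ^ (n + (K + 1))‖
          ≤ (((n + (K + 1)).factorial : ℕ) : ℝ)⁻¹ * 1 := by
            apply mul_le_mul_of_nonneg_left hp; positivity
        _ = _ := mul_one _
    exact h1.trans (hfac n)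
  have hgsum : Summable (fun n : ℕ => (((K + 1).factorial : ℝ))⁻¹ * ((n.factorial : ℝ))⁻¹) := by
    have := (Real.summable_pow_div_factorial 1).mul_left ((((K + 1).factorial : ℝ))⁻¹)
    simpa [one_div] using this
  have hδnorm : ‖δ‖ ≤ Real.exp 1 / (K + 1).factorial := by
    rw [hδeq, norm_neg]
    have hfs : Summable fun n : ℕ => ‖f (n + (K + 1))‖ := by
      exact (summable_nat_add_iff (f := fun n => ‖f n‖) (K + 1)).2
        (NormedSpace.norm_expSeries_summable' (𝕂 := ℂ) (h • A))
    calc ‖∑' n : ℕ, f (n + (K + 1))‖ ≤ ∑' n : ℕ, ‖f (n + (K + 1))‖ :=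
          norm_tsum_le_tsum_norm hfs
      _ ≤ ∑' n : ℕ, (((K + 1).factorial : ℝ))⁻¹ * ((n.factorial : ℝ))⁻¹ :=
          Summable.tsum_le_tsum hnormf hfs hgsum
      _ = (((K + 1).factorial : ℝ))⁻¹ * ∑' n : ℕ, ((n.factorial : ℝ))⁻¹ := tsum_mul_left
      _ = Real.exp 1 / (K + 1).factorial := by rw [← hexp1, div_eq_inv_mul]
  refine ⟨hδnorm, ?_⟩
  intro m hm
  set E := exp (h • A) with hE
  set x := ‖δ‖ with hx
  have hx0 : 0 ≤ x := norm_nonneg _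
  set M := sSup ((fun s => ‖exp (s • A)‖) '' Set.Icc 0 ((m : ℝ) * h)) with hM
  have hmh0 : (0 : ℝ) ≤ (m : ℝ) * h := by positivity
  have hexpc : Continuous (exp : Matrix (Fin N) (Fin N) ℂ → Matrix (Fin N) (Fin N) ℂ) := by
    haveI hcs : CompleteSpace (Matrix (Fin N) (Fin N) ℂ) := inferInstance
    letI : NormedRing (Matrix (Fin N) (Fin N) ℂ) := Matrix.linftyOpNormedRing
    letI : NormedAlgebra ℚ (Matrix (Fin N) (Fin N) ℂ) := Matrix.linftyOpNormedAlgebra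
    exact @exp_continuous _ _ _ hcs
  have hcont : Continuous (fun s : ℝ => ‖exp (s • A)‖) :=
    continuous_norm.comp (hexpc.comp (continuous_id.smul continuous_const))
  have hbdd : BddAbove ((fun s : ℝ => ‖exp (s • A)‖) '' Set.Icc 0 ((m : ℝ) * h)) :=
    (isCompact_Icc.image hcont).bddAbove
  have hMem : ∀ s ∈ Set.Icc (0 : ℝ) ((m : ℝ) * h), ‖exp (s • A)‖ ≤ M :=
    fun s hs => le_csSup hbdd ⟨s, hs, rfl⟩
  have hM0 : 0 ≤ M := le_trans (norm_nonneg _) (hMem 0 ⟨le_refl _, hmh0⟩)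
  -- powers of E are exponentials
  have hEpow : ∀ n : ℕ, E ^ n = exp (((n : ℝ) * h) • A) := by
    intro n
    rw [hE, ← Matrix.exp_nsmul, ← Nat.cast_smul_eq_nsmul ℝ, smul_smul]
  have hEpow_le : ∀ n : ℕ, n ≤ m → ‖E ^ n‖ ≤ M := by
    intro n hn
    rw [hEpow n]
    apply hMem
    constructor
    · positivity
    · apply mul_le_mul_of_nonneg_right _ hh.le
      exact_mod_cast hn
  -- commutation
  have hcV : Commute (h • A) V := by
    rw [hV]
    exact Commute.sum_right _ _ _ fun k _ =>
      (((Commute.refl (h • A)).pow_right k).smul_right _)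
  have hcomm : Commute δ E := by
    rw [hδ]
    exact (hcV.symm.exp_right).sub_left (Commute.refl E)
  have hVE : V = δ + E := by rw [hδ]; abel
  -- binomial expansion
  have key : V ^ m - exp (((m : ℝ) * h) • A) =
      ∑ i ∈ Finset.range m, (m.choose (i + 1) : ℕ) •
        (δ ^ (i + 1) * E ^ (m - (i + 1))) := by
    rw [hVE, hcomm.add_pow m, Finset.sum_range_succ']
    have h0 : δ ^ 0 * E ^ (m - 0) * (m.choose 0 : Matrix (Fin N) (Fin N) ℂ) = E ^ m := by
      simp
    rw [h0, ← hEpow m, add_sub_cancel_right]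
    refine Finset.sum_congr rfl fun i _ => ?_
    rw [nsmul_eq_mul, (Nat.commute_cast _ _).eq]
  rw [key]
  -- bound each term
  have hterm : ∀ i ∈ Finset.range m,
      ‖(m.choose (i + 1) : ℕ) • (δ ^ (i + 1) * E ^ (m - (i + 1)))‖ ≤
        (m.choose (i + 1) : ℝ) * (x ^ (i + 1) * M) := by
    intro i hi
    rw [← Nat.cast_smul_eq_nsmul ℝ, norm_smul, Real.norm_natCast]
    apply mul_le_mul_of_nonneg_left _ (Nat.cast_nonneg _)
    calc ‖δ ^ (i + 1) * E ^ (m - (i + 1))‖ ≤ ‖δ ^ (i + 1)‖ * ‖E ^ (m - (i + 1))‖ :=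
          norm_mul_le _ _
      _ ≤ x ^ (i + 1) * M := by
          apply mul_le_mul (norm_pow_le' _ (Nat.succ_pos _))
            (hEpow_le _ (Nat.sub_le _ _)) (norm_nonneg _) (by positivity)
  -- choose bound: choose m (i+1) ≤ m^(i+1) / i!
  have hchoose : ∀ i : ℕ, (m.choose (i + 1) : ℝ) ≤ (m : ℝ) ^ (i + 1) / (i.factorial : ℝ) := by
    intro i
    rw [le_div_iff₀ (by positivity)]
    have h1 : m.choose (i + 1) * i.factorial ≤ m ^ (i + 1) := by
      calc m.choose (i + 1) * i.factorial ≤ m.choose (i + 1) * (i + 1).factorial := by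
            exact Nat.mul_le_mul_left _ (Nat.factorial_le (Nat.le_succ i))
        _ = m.descFactorial (i + 1) := by
            rw [Nat.descFactorial_eq_factorial_mul_choose, mul_comm]
        _ ≤ m ^ (i + 1) := Nat.descFactorial_le_pow m (i + 1)
    exact_mod_cast h1
  calc ‖∑ i ∈ Finset.range m, (m.choose (i + 1) : ℕ) •
        (δ ^ (i + 1) * E ^ (m - (i + 1)))‖
      ≤ ∑ i ∈ Finset.range m, (m.choose (i + 1) : ℝ) * (x ^ (i + 1) * M) :=
        norm_sum_le_of_le _ hterm
    _ ≤ ∑ i ∈ Finset.range m, ((m : ℝ) * (((m : ℝ) * x) ^ i / (i.factorial : ℝ))) * (x * M) := by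
        apply Finset.sum_le_sum
        intro i _
        have := hchoose i
        have h2 : (m.choose (i + 1) : ℝ) * (x ^ (i + 1) * M) ≤
            ((m : ℝ) ^ (i + 1) / (i.factorial : ℝ)) * (x ^ (i + 1) * M) := by
          apply mul_le_mul_of_nonneg_right this (by positivity)
        refine h2.trans (le_of_eq ?_)
        rw [pow_succ, pow_succ]
        ring
    _ = (m : ℝ) * (∑ i ∈ Finset.range m, ((m : ℝ) * x) ^ i / (i.factorial : ℝ)) * (x * M) := by
        rw [Finset.mul_sum, Finset.sum_mul]
    _ ≤ (m : ℝ) * Real.exp ((m : ℝ) * x) * (x * M) := by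
        apply mul_le_mul_of_nonneg_right _ (by positivity)
        apply mul_le_mul_of_nonneg_left _ (Nat.cast_nonneg _)
        exact Real.sum_le_exp_of_nonneg (by positivity) m
    _ ≤ 2 * Real.exp 1 * m * Real.exp ((m : ℝ) * x) * M * x := by
        have h2e : (1 : ℝ) ≤ 2 * Real.exp 1 := by
          nlinarith [Real.one_le_exp (zero_le_one (α := ℝ))]
        have ht : 0 ≤ (m : ℝ) * Real.exp ((m : ℝ) * x) * (x * M) := by positivity
        nlinarith [ht, h2e]
end

section
/- Let A, B, C ∈ ℂ^{N×N}, h ≤ min{1/‖A‖, 1/‖B‖}, I_C = ∫₀ʰ e^{(h−τ)A†} C e^{(h−τ)B} dτ, and define the truncated approximation Ĩ_C = Σ_{p,q=0}^{K} (A†)^p C B^q /(p! q!) · h^{p+q+1}/(p+q+1). Then ‖I_C − Ĩ_C‖ ≤ 2 e² ‖C‖ h / (K+1)!. -/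
open scoped Matrix.Norms.L2Operator
open NormedSpace Matrix

section Helpers

variable {𝔸 : Type*} [NormedRing 𝔸] [NormedAlgebra ℂ 𝔸] [CompleteSpace 𝔸]

set_option linter.unusedSectionVars false

lemma my_summable_inv_fact : Summable fun n : ℕ => (1:ℝ) / n.factorial := by
  simpa using Real.summable_pow_div_factorial 1

lemma my_tsum_inv_fact : ∑' n : ℕ, (1 : ℝ) / n.factorial = Real.exp 1 := by
  rw [Real.exp_eq_exp_ℝ, exp_eq_tsum ℝ]
  simp [div_eq_inv_mul]

lemma my_norm_pow_le_one {x : 𝔸} (hx : ‖x‖ ≤ 1) (h1 : ‖(1:𝔸)‖ ≤ 1) (n : ℕ) : ‖x ^ n‖ ≤ 1 := by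
  rcases Nat.eq_zero_or_pos n with h | h
  · simpa [h] using h1
  · exact (norm_pow_le' x h).trans (pow_le_one₀ (norm_nonneg x) hx)

lemma my_term_bound' {x : 𝔸} (hx : ‖x‖ ≤ 1) (h1 : ‖(1:𝔸)‖ ≤ 1)
    (n : ℕ) : ‖((n.factorial : ℂ))⁻¹ • x ^ n‖ ≤ (1:ℝ) / n.factorial := by
  rw [norm_smul]
  have h2 : ‖((n.factorial : ℂ))⁻¹‖ = ((n.factorial : ℝ))⁻¹ := by simp
  rw [h2, one_div]
  calc ((n.factorial:ℝ))⁻¹ * ‖x ^ n‖ ≤ ((n.factorial:ℝ))⁻¹ * 1 :=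
        mul_le_mul_of_nonneg_left (my_norm_pow_le_one hx h1 n) (by positivity)
    _ = ((n.factorial:ℝ))⁻¹ := mul_one _

lemma my_summable_aux (K : ℕ) : Summable fun n : ℕ => (1:ℝ) / ((K+1).factorial * n.factorial) := by
  have := my_summable_inv_fact.mul_left ((((K+1).factorial : ℝ))⁻¹)
  apply this.congr
  intro n
  rw [div_eq_inv_mul, div_eq_inv_mul, mul_one, mul_one, mul_inv]

lemma my_term_norm_bound {x : 𝔸} (hx : ‖x‖ ≤ 1) (h1 : ‖(1:𝔸)‖ ≤ 1) (K n : ℕ) :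
    ‖(((n + (K+1)).factorial : ℂ))⁻¹ • x ^ (n + (K+1))‖ ≤
      (1:ℝ) / ((K+1).factorial * n.factorial) := by
  have h4 : ((K+1).factorial * n.factorial : ℝ) ≤ ((n + (K+1)).factorial : ℝ) := by
    exact_mod_cast Nat.le_of_dvd (Nat.factorial_pos _)
      (by simpa [Nat.add_comm] using Nat.factorial_mul_factorial_dvd_factorial_add (K+1) n)
  refine (my_term_bound' hx h1 _).trans ?_
  rw [one_div, one_div]
  exact inv_anti₀ (by positivity) h4

lemma my_exp_tail_bound {x : 𝔸} (hx : ‖x‖ ≤ 1) (h1 : ‖(1:𝔸)‖ ≤ 1) (K : ℕ) :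
    ‖NormedSpace.exp x - ∑ p ∈ Finset.range (K+1), ((p.factorial : ℂ))⁻¹ • x ^ p‖ ≤
      Real.exp 1 / (K+1).factorial := by
  have hs : Summable fun n : ℕ => ((n.factorial : ℂ))⁻¹ • x ^ n := expSeries_summable' x
  have hsplit := Summable.sum_add_tsum_nat_add (K+1) hs
  have hexp : NormedSpace.exp x = ∑' n : ℕ, ((n.factorial : ℂ))⁻¹ • x ^ n := by
    simp [exp_eq_tsum ℂ]
  have heq : NormedSpace.exp x - ∑ p ∈ Finset.range (K+1), ((p.factorial : ℂ))⁻¹ • x ^ p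
      = ∑' n : ℕ, (((n + (K+1)).factorial : ℂ))⁻¹ • x ^ (n + (K+1)) := by
    rw [hexp, ← hsplit]; abel
  rw [heq]
  have hsum2 : Summable fun n : ℕ => ‖(((n + (K+1)).factorial : ℂ))⁻¹ • x ^ (n + (K+1))‖ :=
    Summable.of_nonneg_of_le (fun n => norm_nonneg _) (my_term_norm_bound hx h1 K)
      (my_summable_aux K)
  calc ‖∑' n : ℕ, (((n + (K+1)).factorial : ℂ))⁻¹ • x ^ (n + (K+1))‖
      ≤ ∑' n : ℕ, ‖(((n + (K+1)).factorial : ℂ))⁻¹ • x ^ (n + (K+1))‖ :=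
        norm_tsum_le_tsum_norm hsum2
    _ ≤ ∑' n : ℕ, (1:ℝ) / ((K+1).factorial * n.factorial) :=
        Summable.tsum_le_tsum (my_term_norm_bound hx h1 K) hsum2 (my_summable_aux K)
    _ = Real.exp 1 / (K+1).factorial := by
        rw [← my_tsum_inv_fact, ← tsum_div_const]
        apply tsum_congr
        intro n
        rw [div_div, mul_comm]

lemma my_partial_sum_bound {x : 𝔸} (hx : ‖x‖ ≤ 1) (h1 : ‖(1:𝔸)‖ ≤ 1) (K : ℕ) :
    ‖∑ p ∈ Finset.range (K+1), ((p.factorial : ℂ))⁻¹ • x ^ p‖ ≤ Real.exp 1 := by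
  calc ‖∑ p ∈ Finset.range (K+1), ((p.factorial : ℂ))⁻¹ • x ^ p‖
      ≤ ∑ p ∈ Finset.range (K+1), ‖((p.factorial : ℂ))⁻¹ • x ^ p‖ := norm_sum_le _ _
    _ ≤ ∑ p ∈ Finset.range (K+1), (1:ℝ) ^ p / p.factorial := by
        refine Finset.sum_le_sum fun p _ => ?_
        rw [one_pow]
        exact my_term_bound' hx h1 p
    _ ≤ Real.exp 1 := Real.sum_le_exp_of_nonneg zero_le_one _

lemma my_norm_exp_le_e {x : 𝔸} (hx : ‖x‖ ≤ 1) (h1 : ‖(1:𝔸)‖ ≤ 1) : ‖NormedSpace.exp x‖ ≤ Real.exp 1 := by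
  have hexp : NormedSpace.exp x = ∑' n : ℕ, ((n.factorial : ℂ))⁻¹ • x ^ n := by simp [exp_eq_tsum ℂ]
  rw [hexp]
  have hsum : Summable fun n : ℕ => ‖((n.factorial : ℂ))⁻¹ • x ^ n‖ := norm_expSeries_summable' x
  calc ‖∑' n : ℕ, ((n.factorial : ℂ))⁻¹ • x ^ n‖ ≤ ∑' n : ℕ, ‖((n.factorial : ℂ))⁻¹ • x ^ n‖ :=
        norm_tsum_le_tsum_norm hsum
    _ ≤ ∑' n : ℕ, (1:ℝ) / n.factorial :=
        Summable.tsum_le_tsum (fun n => my_term_bound' hx h1 n) hsum my_summable_inv_fact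
    _ = Real.exp 1 := my_tsum_inv_fact

end Helpers

section MatrixHelpers

lemma my_trunc_eq (N K : ℕ) (M : Matrix (Fin N) (Fin N) ℂ) (s : ℝ) :
    ∑ p ∈ Finset.range (K+1), ((p.factorial:ℂ))⁻¹ • (s • M)^p
      = ∑ p ∈ Finset.range (K+1), (s^p/(p.factorial:ℝ)) • M^p := by
  refine Finset.sum_congr rfl fun p _ => ?_
  rw [smul_pow, div_eq_inv_mul, mul_smul,
    ← algebraMap_smul ℂ ((p.factorial:ℝ))⁻¹ (s ^ p • M ^ p)]
  norm_num

lemma my_prod_expand (N K : ℕ) (A C B : Matrix (Fin N) (Fin N) ℂ) (s : ℝ) :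
    (∑ p ∈ Finset.range (K+1), (s^p/(p.factorial:ℝ)) • A^p) * C *
      (∑ q ∈ Finset.range (K+1), (s^q/(q.factorial:ℝ)) • B^q)
    = ∑ p ∈ Finset.range (K+1), ∑ q ∈ Finset.range (K+1),
        (s^(p+q)/((p.factorial:ℝ)*(q.factorial:ℝ))) • (A^p * C * B^q) := by
  rw [Finset.sum_mul, Finset.sum_mul]
  refine Finset.sum_congr rfl fun p _ => ?_
  rw [Finset.mul_sum]
  refine Finset.sum_congr rfl fun q _ => ?_
  rw [smul_mul_assoc, smul_mul_assoc, mul_smul_comm, smul_smul, pow_add]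
  congr 1
  field_simp

lemma my_norm_one_le (N : ℕ) : ‖(1 : Matrix (Fin N) (Fin N) ℂ)‖ ≤ 1 := by
  rw [Matrix.cstar_norm_def, _root_.map_one, ContinuousLinearMap.one_def]
  exact ContinuousLinearMap.norm_id_le

end MatrixHelpers

/-- **Truncated Taylor series approximation to the short-time integral `I_C`.**
Let `A, B, C ∈ ℂ^{N×N}` and `h > 0` with `h·‖A‖ ≤ 1` and `h·‖B‖ ≤ 1`
(i.e. `h ≤ min{1/‖A‖, 1/‖B‖}`).  With
`I_C = ∫₀ʰ e^{(h−τ)A†} C e^{(h−τ)B} dτ` and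
`Ĩ_C = Σ_{p,q=0}^{K} (A†)^p C B^q/(p!·q!) · h^{p+q+1}/(p+q+1)`, we have
`‖I_C − Ĩ_C‖ ≤ 2 e² ‖C‖ h / (K+1)!`. -/
theorem truncated_IC_error
    (N : ℕ) (A B C : Matrix (Fin N) (Fin N) ℂ) (h : ℝ) (hh : 0 < h)
    (hA : h * ‖A‖ ≤ 1) (hB : h * ‖B‖ ≤ 1) (K : ℕ)
    (IC ICtilde : Matrix (Fin N) (Fin N) ℂ)
    (hIC : IC = ∫ τ in (0:ℝ)..h, NormedSpace.exp ((h - τ) • Aᴴ) * C * NormedSpace.exp ((h - τ) • B))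
    (hICt : ICtilde = ∑ p ∈ Finset.range (K + 1), ∑ q ∈ Finset.range (K + 1),
      (h ^ (p + q + 1) / ((p + q + 1) * p.factorial * q.factorial) : ℝ) •
        (Aᴴ ^ p * C * B ^ q)) :
    ‖IC - ICtilde‖ ≤ 2 * Real.exp 1 ^ 2 * ‖C‖ * h / (K + 1).factorial := by
  have h1 : ‖(1 : Matrix (Fin N) (Fin N) ℂ)‖ ≤ 1 := my_norm_one_le N
  set e := Real.exp 1 with he
  have he1 : (1:ℝ) ≤ e := by rw [he]; linarith [Real.add_one_le_exp 1]
  have he0 : (0:ℝ) < e := lt_of_lt_of_le one_pos he1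
  -- the truncated integrand
  set g : ℕ → ℕ → ℝ → Matrix (Fin N) (Fin N) ℂ := fun p q τ =>
    ((h-τ)^(p+q)/((p.factorial:ℝ)*(q.factorial:ℝ))) • (Aᴴ^p * C * B^q) with hg
  set TA : ℝ → Matrix (Fin N) (Fin N) ℂ := fun s =>
    ∑ p ∈ Finset.range (K+1), (s^p/(p.factorial:ℝ)) • Aᴴ^p with hTA
  set TB : ℝ → Matrix (Fin N) (Fin N) ℂ := fun s =>
    ∑ q ∈ Finset.range (K+1), (s^q/(q.factorial:ℝ)) • B^q with hTB
  -- norms of scaled matrices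
  have hnormA : ∀ s : ℝ, 0 ≤ s → s ≤ h → ‖s • Aᴴ‖ ≤ 1 := by
    intro s hs0 hsh
    rw [norm_smul, Real.norm_eq_abs, abs_of_nonneg hs0, Matrix.l2_opNorm_conjTranspose]
    calc s * ‖A‖ ≤ h * ‖A‖ := mul_le_mul_of_nonneg_right hsh (norm_nonneg A)
      _ ≤ 1 := hA
  have hnormB : ∀ s : ℝ, 0 ≤ s → s ≤ h → ‖s • B‖ ≤ 1 := by
    intro s hs0 hsh
    rw [norm_smul, Real.norm_eq_abs, abs_of_nonneg hs0]
    calc s * ‖B‖ ≤ h * ‖B‖ := mul_le_mul_of_nonneg_right hsh (norm_nonneg B)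
      _ ≤ 1 := hB
  have hTAeq : ∀ s : ℝ, TA s = ∑ p ∈ Finset.range (K+1), ((p.factorial:ℂ))⁻¹ • (s • Aᴴ)^p := by
    intro s; rw [hTA]; exact (my_trunc_eq N K Aᴴ s).symm
  have hTBeq : ∀ s : ℝ, TB s = ∑ q ∈ Finset.range (K+1), ((q.factorial:ℂ))⁻¹ • (s • B)^q := by
    intro s; rw [hTB]; exact (my_trunc_eq N K B s).symm
  -- pointwise bounds
  have hboundA : ∀ s : ℝ, 0 ≤ s → s ≤ h →
      ‖NormedSpace.exp (s • Aᴴ) - TA s‖ ≤ e / (K+1).factorial := by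
    intro s hs0 hsh
    rw [hTAeq s]
    exact my_exp_tail_bound (hnormA s hs0 hsh) h1 K
  have hboundB : ∀ s : ℝ, 0 ≤ s → s ≤ h →
      ‖NormedSpace.exp (s • B) - TB s‖ ≤ e / (K+1).factorial := by
    intro s hs0 hsh
    rw [hTBeq s]
    exact my_exp_tail_bound (hnormB s hs0 hsh) h1 K
  have hTAle : ∀ s : ℝ, 0 ≤ s → s ≤ h → ‖TA s‖ ≤ e := by
    intro s hs0 hsh
    rw [hTAeq s]
    exact my_partial_sum_bound (hnormA s hs0 hsh) h1 K
  have hexpBle : ∀ s : ℝ, 0 ≤ s → s ≤ h → ‖NormedSpace.exp (s • B)‖ ≤ e :=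
    fun s hs0 hsh => my_norm_exp_le_e (hnormB s hs0 hsh) h1
  -- ICtilde as an integral
  have hgcont : ∀ p q : ℕ, Continuous (g p q) := fun p q =>
    (((continuous_const.sub continuous_id).pow (p+q)).div_const _).smul continuous_const
  have hgint : ∀ p q : ℕ, IntervalIntegrable (g p q) MeasureTheory.volume 0 h :=
    fun p q => (hgcont p q).intervalIntegrable _ _
  have hginner : ∀ p : ℕ, IntervalIntegrable (fun τ => ∑ q ∈ Finset.range (K+1), g p q τ)
      MeasureTheory.volume 0 h := by
    intro p
    exact (continuous_finset_sum _ (fun q _ => hgcont p q)).intervalIntegrable _ _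
  have hpow : ∀ n : ℕ, (∫ τ in (0:ℝ)..h, (h - τ)^n) = h^(n+1)/(n+1) := by
    intro n
    rw [intervalIntegral.integral_comp_sub_left (fun x => x^n) h]
    simp [integral_pow]
  have hICt2 : ICtilde = ∫ τ in (0:ℝ)..h,
      ∑ p ∈ Finset.range (K+1), ∑ q ∈ Finset.range (K+1), g p q τ := by
    rw [intervalIntegral.integral_finset_sum
      (f := fun p τ => ∑ q ∈ Finset.range (K+1), g p q τ) (fun p _ => hginner p)]
    rw [hICt]
    refine Finset.sum_congr rfl fun p _ => ?_
    rw [intervalIntegral.integral_finset_sum (f := fun q τ => g p q τ) (fun q _ => hgint p q)]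
    refine Finset.sum_congr rfl fun q _ => ?_
    rw [hg]
    calc (h ^ (p + q + 1) / ((p + q + 1) * p.factorial * q.factorial) : ℝ) •
          (Aᴴ ^ p * C * B ^ q)
        = (∫ τ in (0:ℝ)..h, (h-τ)^(p+q)/((p.factorial:ℝ)*(q.factorial:ℝ))) •
            (Aᴴ ^ p * C * B ^ q) := by
          congr 1
          rw [intervalIntegral.integral_div, hpow (p+q), div_div]
          push_cast
          ring_nf
      _ = _ := (intervalIntegral.integral_smul_const _ _).symm
  -- the truncated integrand as product
  have hprod : ∀ τ : ℝ, ∑ p ∈ Finset.range (K+1), ∑ q ∈ Finset.range (K+1), g p q τ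
      = TA (h-τ) * C * TB (h-τ) := by
    intro τ
    rw [hTA, hTB]
    exact (my_prod_expand N K Aᴴ C B (h-τ)).symm
  -- integrability of the exp integrand
  have hexpcontA : Continuous (fun τ : ℝ => NormedSpace.exp ((h - τ) • Aᴴ)) :=
    letI : NormedAlgebra ℚ (Matrix (Fin N) (Fin N) ℂ) := NormedAlgebra.restrictScalars ℚ ℂ _
    exp_continuous.comp ((continuous_const.sub continuous_id).smul continuous_const)
  have hexpcontB : Continuous (fun τ : ℝ => NormedSpace.exp ((h - τ) • B)) :=
    letI : NormedAlgebra ℚ (Matrix (Fin N) (Fin N) ℂ) := NormedAlgebra.restrictScalars ℚ ℂ _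
    exp_continuous.comp ((continuous_const.sub continuous_id).smul continuous_const)
  have hfcont : Continuous (fun τ : ℝ => NormedSpace.exp ((h - τ) • Aᴴ) * C * NormedSpace.exp ((h - τ) • B)) :=
    (hexpcontA.mul continuous_const).mul hexpcontB
  have hTcont : Continuous (fun τ : ℝ => TA (h-τ) * C * TB (h-τ)) := by
    have cA : Continuous (fun τ : ℝ => TA (h-τ)) := by
      rw [hTA]
      exact continuous_finset_sum _ (fun p _ =>
        ((continuous_pow p).comp (continuous_const.sub continuous_id)).div_const _
          |>.smul continuous_const)
    have cB : Continuous (fun τ : ℝ => TB (h-τ)) := by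
      rw [hTB]
      exact continuous_finset_sum _ (fun q _ =>
        ((continuous_pow q).comp (continuous_const.sub continuous_id)).div_const _
          |>.smul continuous_const)
    exact (cA.mul continuous_const).mul cB
  -- difference as a single integral
  have hdiff : IC - ICtilde = ∫ τ in (0:ℝ)..h,
      (NormedSpace.exp ((h - τ) • Aᴴ) * C * NormedSpace.exp ((h - τ) • B) - TA (h-τ) * C * TB (h-τ)) := by
    have hcongr : (∫ τ in (0:ℝ)..h, ∑ p ∈ Finset.range (K+1), ∑ q ∈ Finset.range (K+1), g p q τ)
        = ∫ τ in (0:ℝ)..h, TA (h-τ) * C * TB (h-τ) :=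
      intervalIntegral.integral_congr (fun τ _ => hprod τ)
    rw [hIC, hICt2, hcongr, ← intervalIntegral.integral_sub (hfcont.intervalIntegrable _ _)
      (hTcont.intervalIntegrable _ _)]
  -- pointwise bound on the difference
  have hptwise : ∀ τ ∈ Set.uIoc (0:ℝ) h,
      ‖NormedSpace.exp ((h - τ) • Aᴴ) * C * NormedSpace.exp ((h - τ) • B) - TA (h-τ) * C * TB (h-τ)‖ ≤
        2 * e^2 * ‖C‖ / (K+1).factorial := by
    intro τ hτ
    rw [Set.uIoc_of_le hh.le] at hτ
    have hs0 : (0:ℝ) ≤ h - τ := by linarith [hτ.2]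
    have hsh : h - τ ≤ h := by linarith [hτ.1]
    set s := h - τ
    set X := NormedSpace.exp (s • Aᴴ)
    set Y := NormedSpace.exp (s • B)
    set P := TA s
    set Q := TB s
    have hiden : X * C * Y - P * C * Q = (X - P) * C * Y + P * C * (Y - Q) := by
      noncomm_ring
    rw [hiden]
    have hb1 : ‖(X - P) * C * Y‖ ≤ (e / (K+1).factorial) * ‖C‖ * e := by
      calc ‖(X - P) * C * Y‖ ≤ ‖(X - P) * C‖ * ‖Y‖ := norm_mul_le _ _
        _ ≤ ‖X - P‖ * ‖C‖ * ‖Y‖ :=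
            mul_le_mul_of_nonneg_right (norm_mul_le _ _) (norm_nonneg _)
        _ ≤ (e / (K+1).factorial) * ‖C‖ * e := by
            gcongr
            · exact hboundA s hs0 hsh
            · exact hexpBle s hs0 hsh
    have hb2 : ‖P * C * (Y - Q)‖ ≤ e * ‖C‖ * (e / (K+1).factorial) := by
      calc ‖P * C * (Y - Q)‖ ≤ ‖P * C‖ * ‖Y - Q‖ := norm_mul_le _ _
        _ ≤ ‖P‖ * ‖C‖ * ‖Y - Q‖ :=
            mul_le_mul_of_nonneg_right (norm_mul_le _ _) (norm_nonneg _)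
        _ ≤ e * ‖C‖ * (e / (K+1).factorial) := by
            gcongr
            · exact hTAle s hs0 hsh
            · exact hboundB s hs0 hsh
    calc ‖(X - P) * C * Y + P * C * (Y - Q)‖
        ≤ ‖(X - P) * C * Y‖ + ‖P * C * (Y - Q)‖ := norm_add_le _ _
      _ ≤ (e / (K+1).factorial) * ‖C‖ * e + e * ‖C‖ * (e / (K+1).factorial) :=
          add_le_add hb1 hb2
      _ = 2 * e^2 * ‖C‖ / (K+1).factorial := by ring
  -- conclude
  rw [hdiff]
  calc ‖∫ τ in (0:ℝ)..h,
        (NormedSpace.exp ((h - τ) • Aᴴ) * C * NormedSpace.exp ((h - τ) • B) - TA (h-τ) * C * TB (h-τ))‖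
      ≤ (2 * e^2 * ‖C‖ / (K+1).factorial) * |h - 0| :=
        intervalIntegral.norm_integral_le_of_norm_le_const hptwise
    _ = 2 * e^2 * ‖C‖ * h / (K+1).factorial := by
        rw [sub_zero, abs_of_pos hh]; ring
end

section
/- Let 0 < δ ≤ π/16 and t > 0 with t ≤ 1/sin(2δ), and set L(θ) = (1 − e^{−t sin θ})/sin θ. Then L(δ) − L(2δ) ≥ t²(sin(2δ)/e − sin(δ)/2), and moreover L(δ) − L(2δ) ≥ (1/5)·sin(δ)·L(δ)². -/

lemma exp_neg_le_quad {x : ℝ} (hx : 0 ≤ x) : Real.exp (-x) ≤ 1 - x + x ^ 2 / 2 := by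
  have hderiv : ∀ y : ℝ, HasDerivAt (fun z => 1 - z + z ^ 2 / 2 - Real.exp (-z))
      (-1 + y + Real.exp (-y)) y := by
    intro y
    have h1 : HasDerivAt (fun z : ℝ => Real.exp (-z)) (-Real.exp (-y)) y := by
      simpa using (((hasDerivAt_id y).neg).exp)
    have h2 : HasDerivAt (fun z : ℝ => 1 - z + z ^ 2 / 2) (-1 + y) y := by
      have := ((hasDerivAt_const y (1:ℝ)).sub (hasDerivAt_id y)).add
        ((hasDerivAt_pow 2 y).div_const 2)
      refine this.congr_deriv ?_
      push_cast; ring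
    exact (h2.sub h1).congr_deriv (by ring)
  have mono : MonotoneOn (fun z => 1 - z + z ^ 2 / 2 - Real.exp (-z)) (Set.Ici 0) := by
    apply monotoneOn_of_deriv_nonneg (convex_Ici 0)
    · exact Continuous.continuousOn (by continuity)
    · intro y hy; exact (hderiv y).differentiableAt.differentiableWithinAt
    · intro y hy
      rw [(hderiv y).deriv]
      have := Real.add_one_le_exp (-y)
      linarith
  have h0 : (fun z => 1 - z + z ^ 2 / 2 - Real.exp (-z)) 0 = 0 := by simp
  have := mono (Set.self_mem_Ici) (Set.mem_Ici.2 hx) hx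
  rw [h0] at this
  simp only at this
  linarith

lemma quad_le_exp_neg {x : ℝ} (hx0 : 0 ≤ x) (hx1 : x ≤ 1) :
    1 - x + x ^ 2 / Real.exp 1 ≤ Real.exp (-x) := by
  set h : ℝ → ℝ := fun z => 1 - Real.exp z * (1 - z) - z ^ 2 * Real.exp (z - 1) with hh
  have hderiv : ∀ y : ℝ, HasDerivAt h
      (-(Real.exp y * (1 - y) + Real.exp y * (-1)) -
        (2 * y * Real.exp (y - 1) + y ^ 2 * Real.exp (y - 1))) y := by
    intro y
    have e1 : HasDerivAt (fun z : ℝ => Real.exp z * (1 - z))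
        (Real.exp y * (1 - y) + Real.exp y * (-1)) y := by
      have := (Real.hasDerivAt_exp y).mul ((hasDerivAt_const y (1:ℝ)).sub (hasDerivAt_id y))
      refine this.congr_deriv ?_
      simp [id]
    have e2' : HasDerivAt (fun z : ℝ => Real.exp (z - 1)) (Real.exp (y - 1)) y := by
      simpa using ((hasDerivAt_id y).sub_const 1).exp
    have e2 : HasDerivAt (fun z : ℝ => z ^ 2 * Real.exp (z - 1))
        (2 * y * Real.exp (y - 1) + y ^ 2 * Real.exp (y - 1)) y := by
      have := (hasDerivAt_pow 2 y).mul e2'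
      refine this.congr_deriv ?_
      push_cast; ring
    exact (((hasDerivAt_const y (1:ℝ)).sub e1).sub e2).congr_deriv (by ring)
  have hE2 : (2:ℝ) < Real.exp 1 := by linarith [Real.exp_one_gt_d9]
  have hE3 : Real.exp 1 < 3 := by linarith [Real.exp_one_lt_d9]
  have expsplit : ∀ y : ℝ, Real.exp y = Real.exp (y - 1) * Real.exp 1 := by
    intro y; rw [← Real.exp_add]; ring_nf
  have mono : MonotoneOn h (Set.Icc 0 (Real.exp 1 - 2)) := by
    apply monotoneOn_of_deriv_nonneg (convex_Icc _ _)
    · exact Continuous.continuousOn (by fun_prop)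
    · intro y hy; exact (hderiv y).differentiableAt.differentiableWithinAt
    · intro y hy
      rw [interior_Icc, Set.mem_Ioo] at hy
      rw [(hderiv y).deriv, expsplit y]
      have hp := Real.exp_pos (y - 1)
      have key : 0 ≤ Real.exp (y - 1) * y * (Real.exp 1 - 2 - y) :=
        mul_nonneg (mul_nonneg hp.le hy.1.le) (by linarith [hy.2])
      nlinarith [key]
  have anti : AntitoneOn h (Set.Icc (Real.exp 1 - 2) 1) := by
    apply antitoneOn_of_deriv_nonpos (convex_Icc _ _)
    · exact Continuous.continuousOn (by fun_prop)
    · intro y hy; exact (hderiv y).differentiableAt.differentiableWithinAt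
    · intro y hy
      rw [interior_Icc, Set.mem_Ioo] at hy
      rw [(hderiv y).deriv, expsplit y]
      have hp := Real.exp_pos (y - 1)
      have key : 0 ≤ Real.exp (y - 1) * y * (y - (Real.exp 1 - 2)) :=
        mul_nonneg (mul_nonneg hp.le (by linarith [hy.1] : (0:ℝ) ≤ y)) (by linarith [hy.1])
      nlinarith [key]
  have h0 : h 0 = 0 := by simp [hh]
  have h1 : h 1 = 0 := by simp [hh]
  have hx : 0 ≤ h x := by
    rcases le_total x (Real.exp 1 - 2) with hc | hc
    · have := mono (Set.mem_Icc.2 ⟨le_refl 0, by linarith⟩) (Set.mem_Icc.2 ⟨hx0, hc⟩) hx0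
      rw [h0] at this; exact this
    · have := anti (Set.mem_Icc.2 ⟨hc, hx1⟩) (Set.mem_Icc.2 ⟨by linarith, le_refl 1⟩) hx1
      rw [h1] at this; exact this
  simp only [hh] at hx
  have hEx : 0 < Real.exp x := Real.exp_pos x
  have expand : (1 - x + x ^ 2 / Real.exp 1) * Real.exp x
      = Real.exp x * (1 - x) + x ^ 2 * Real.exp (x - 1) := by
    rw [expsplit x]
    have : Real.exp 1 ≠ 0 := (Real.exp_pos 1).ne'
    field_simp
  rw [Real.exp_neg, ← one_div, le_div_iff₀ hEx, expand]
  linarith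

/-- **Gap bound for `L(θ)` in the regime `t ≤ 1/sin(2δ)`.**
For `0 < δ ≤ π/16` and `0 < t` with `t·sin(2δ) ≤ 1` (i.e. `t ≤ 1/sin(2δ)`), the
function `L(θ) = (1 − e^{−t·sin θ})/sin θ` satisfies
`L(δ) − L(2δ) ≥ t²(sin(2δ)/e − sin(δ)/2)` and
`L(δ) − L(2δ) ≥ (1/5)·sin(δ)·L(δ)²`. -/
theorem L_gap_small_t
    (δ t : ℝ) (hδ : 0 < δ) (hδ' : δ ≤ Real.pi / 16) (ht : 0 < t)
    (htδ : t * Real.sin (2 * δ) ≤ 1)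
    (L : ℝ → ℝ)
    (hL : ∀ θ : ℝ, L θ = (1 - Real.exp (-(t * Real.sin θ))) / Real.sin θ) :
    L δ - L (2 * δ) ≥
        t ^ 2 * (Real.sin (2 * δ) / Real.exp 1 - Real.sin δ / 2) ∧
      L δ - L (2 * δ) ≥ (1 / 5) * Real.sin δ * (L δ) ^ 2 := by
  have hπ := Real.pi_gt_d6
  have hπ' := Real.pi_lt_d2
  have hδs : δ ≤ 0.197 := by linarith
  have hδπ : δ < Real.pi := by linarith
  have hs : 0 < Real.sin δ := Real.sin_pos_of_pos_of_lt_pi hδ hδπ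
  have hcos : 1 - δ ^ 2 / 2 ≤ Real.cos δ := Real.one_sub_sq_div_two_le_cos
  have hc : (0.98 : ℝ) ≤ Real.cos δ := by nlinarith
  have hs2 : Real.sin (2 * δ) = 2 * Real.sin δ * Real.cos δ := Real.sin_two_mul δ
  have hs2pos : 0 < Real.sin (2 * δ) := by nlinarith
  have hx2nn : 0 ≤ t * Real.sin (2 * δ) := by positivity
  have hx1x2 : t * Real.sin δ ≤ t * Real.sin (2 * δ) := by nlinarith
  have hx1nn : 0 ≤ t * Real.sin δ := by positivity
  have hE : 0 < Real.exp 1 := Real.exp_pos 1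
  have hE' : Real.exp 1 < 2.7182818286 := Real.exp_one_lt_d9
  -- lower bound on L δ
  have low : t - t ^ 2 * Real.sin δ / 2 ≤ L δ := by
    rw [hL, le_div_iff₀ hs]
    have h1 := exp_neg_le_quad hx1nn
    nlinarith [h1, sq_nonneg (t * Real.sin δ)]
  -- upper bound on L (2δ)
  have up : L (2 * δ) ≤ t - t ^ 2 * Real.sin (2 * δ) / Real.exp 1 := by
    rw [hL, div_le_iff₀ hs2pos]
    have h2 := quad_le_exp_neg hx2nn htδ
    have hexpand : (t - t ^ 2 * Real.sin (2 * δ) / Real.exp 1) * Real.sin (2 * δ)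
        = t * Real.sin (2 * δ) - (t * Real.sin (2 * δ)) ^ 2 / Real.exp 1 := by
      field_simp
    rw [hexpand]
    linarith
  have goal1 : L δ - L (2 * δ) ≥
      t ^ 2 * (Real.sin (2 * δ) / Real.exp 1 - Real.sin δ / 2) := by
    have : t ^ 2 * (Real.sin (2 * δ) / Real.exp 1 - Real.sin δ / 2)
        = t ^ 2 * Real.sin (2 * δ) / Real.exp 1 - t ^ 2 * Real.sin δ / 2 := by ring
    rw [this]
    linarith
  refine ⟨goal1, ?_⟩
  -- L δ ≤ t and L δ ≥ 0
  have hLt : L δ ≤ t := by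
    rw [hL, div_le_iff₀ hs]
    have := Real.add_one_le_exp (-(t * Real.sin δ))
    linarith
  have hL0 : 0 ≤ L δ := by
    rw [hL]
    apply div_nonneg _ hs.le
    have : Real.exp (-(t * Real.sin δ)) ≤ 1 := Real.exp_le_one_iff.2 (by linarith)
    linarith
  -- numeric comparison: sin(2δ)/e ≥ 0.7 sin δ
  have hnum : (7 : ℝ) / 10 * Real.sin δ ≤ Real.sin (2 * δ) / Real.exp 1 := by
    rw [le_div_iff₀ hE, hs2]
    have hce : (7 : ℝ) / 10 * Real.exp 1 ≤ 2 * Real.cos δ := by linarith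
    nlinarith [mul_le_mul_of_nonneg_left hce hs.le]
  have : (1 / 5) * Real.sin δ * (L δ) ^ 2 ≤
      t ^ 2 * (Real.sin (2 * δ) / Real.exp 1 - Real.sin δ / 2) := by
    have h1 : (L δ) ^ 2 ≤ t ^ 2 := pow_le_pow_left₀ hL0 hLt 2
    have h2 : (1 / 5) * Real.sin δ * (L δ) ^ 2 ≤ (1 / 5) * Real.sin δ * t ^ 2 :=
      mul_le_mul_of_nonneg_left h1 (by positivity)
    have h3 : (1 / 5) * Real.sin δ * t ^ 2 ≤
        t ^ 2 * (Real.sin (2 * δ) / Real.exp 1 - Real.sin δ / 2) := by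
      nlinarith [mul_le_mul_of_nonneg_left hnum (sq_nonneg t)]
    linarith
  linarith [goal1, this]
end

section
/- Let 0 < δ ≤ π/16 and t ≥ 1/sin(2δ), and set L(θ) = (1 − e^{−t sin θ})/sin θ. Then L(2δ) ≤ (1/1.96)(1 + e^{−1/2}) L(δ) ≤ 0.82 L(δ), and consequently L(δ) − L(2δ) ≥ (1/5) L(2δ). -/
set_option maxHeartbeats 1000000


/-- **Gap bound for `L(θ)` in the regime `t ≥ 1/sin(2δ)`.**
For `0 < δ ≤ π/16` and `t` with `t·sin(2δ) ≥ 1` (i.e. `t ≥ 1/sin(2δ)`), the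
function `L(θ) = (1 − e^{−t·sin θ})/sin θ` satisfies
`L(2δ) ≤ (1/1.96)(1 + e^{−1/2})·L(δ) ≤ 0.82·L(δ)`, and consequently
`L(δ) − L(2δ) ≥ (1/5)·L(2δ)`. -/
theorem L_gap_large_t
    (δ t : ℝ) (hδ : 0 < δ) (hδ' : δ ≤ Real.pi / 16)
    (htδ : 1 ≤ t * Real.sin (2 * δ))
    (L : ℝ → ℝ)
    (hL : ∀ θ : ℝ, L θ = (1 - Real.exp (-(t * Real.sin θ))) / Real.sin θ) :
    L (2 * δ) ≤ (1 / 1.96) * (1 + Real.exp (-(1 / 2))) * L δ ∧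
      (1 / 1.96) * (1 + Real.exp (-(1 / 2))) * L δ ≤ 0.82 * L δ ∧
      L δ - L (2 * δ) ≥ (1 / 5) * L (2 * δ) := by
  have hπ1 : Real.pi < 3.15 := Real.pi_lt_d2
  have hπ2 : 3.14 < Real.pi := Real.pi_gt_d2
  have hs : 0 < Real.sin δ :=
    Real.sin_pos_of_pos_of_lt_pi hδ (by nlinarith)
  have hs2 : 0 < Real.sin (2 * δ) :=
    Real.sin_pos_of_pos_of_lt_pi (by linarith) (by nlinarith)
  have hcos1 : Real.cos δ ≤ 1 := Real.cos_le_one δ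
  have hcos : (0.98 : ℝ) ≤ Real.cos δ := by
    have h1 : 1 - δ ^ 2 / 2 ≤ Real.cos δ := Real.one_sub_sq_div_two_le_cos
    nlinarith
  have hsin2 : Real.sin (2 * δ) = 2 * Real.sin δ * Real.cos δ := Real.sin_two_mul δ
  have hkey : 1.96 * Real.sin δ ≤ Real.sin (2 * δ) := by rw [hsin2]; nlinarith
  have ht : 0 < t := by nlinarith
  have hts : (1 / 2 : ℝ) ≤ t * Real.sin δ := by nlinarith
  set u := Real.exp (-(t * Real.sin δ)) with hu
  set c := Real.exp (-(1 / 2) : ℝ) with hc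
  have hu0 : 0 < u := Real.exp_pos _
  have huc : u ≤ c := Real.exp_le_exp.mpr (by linarith)
  have hc1 : c ≤ 1 := Real.exp_le_one_iff.mpr (by norm_num)
  -- numeric bound on c
  have hcnum : c ≤ 0.6072 := by
    have he : (2.7182818283 : ℝ) < Real.exp 1 := Real.exp_one_gt_d9
    have hsq : Real.exp (1 / 2 : ℝ) * Real.exp (1 / 2 : ℝ) = Real.exp 1 := by
      rw [← Real.exp_add]; norm_num
    have hp : 0 < Real.exp (1 / 2 : ℝ) := Real.exp_pos _
    have h2 : (1.647 : ℝ) ≤ Real.exp (1 / 2 : ℝ) := by nlinarith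
    have hceq : c = (Real.exp (1 / 2 : ℝ))⁻¹ := by rw [hc, ← Real.exp_neg]
    rw [hceq, inv_le_comm₀ hp (by norm_num)]
    nlinarith
  have hx : Real.exp (-(t * Real.sin δ) + -(t * Real.sin δ)) = u * u :=
    Real.exp_add _ _
  have hE2 : u * u ≤ Real.exp (-(t * Real.sin (2 * δ))) := by
    rw [← hx]
    apply Real.exp_le_exp.mpr
    nlinarith
  have hu1 : u ≤ 1 := Real.exp_le_one_iff.mpr (by nlinarith)
  have hLδnn : (0 : ℝ) ≤ 1 - u := by linarith
  have hnum : 1 - Real.exp (-(t * Real.sin (2 * δ))) ≤ (1 + c) * (1 - u) := by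
    nlinarith [mul_nonneg hLδnn (sub_nonneg.mpr huc)]
  have g1 : L (2 * δ) ≤ (1 / 1.96) * (1 + c) * L δ := by
    rw [hL, hL]
    have h1 : (1 - Real.exp (-(t * Real.sin (2 * δ)))) / Real.sin (2 * δ)
        ≤ ((1 + c) * (1 - u)) / (1.96 * Real.sin δ) := by
      apply div_le_div₀ (mul_nonneg (by linarith) hLδnn) hnum (mul_pos (by norm_num) hs) hkey
    have h2 : ((1 + c) * (1 - u)) / (1.96 * Real.sin δ)
        = (1 / 1.96) * (1 + c) * ((1 - u) / Real.sin δ) := by ring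
    rw [h2] at h1
    exact h1
  have hLδpos : 0 ≤ L δ := by rw [hL]; exact div_nonneg hLδnn hs.le
  have g2 : (1 / 1.96) * (1 + c) * L δ ≤ 0.82 * L δ := by nlinarith
  refine ⟨g1, g2, ?_⟩
  have hL2nn : 0 ≤ L (2 * δ) := by
    rw [hL]
    have h4 : Real.exp (-(t * Real.sin (2 * δ))) ≤ 1 :=
      Real.exp_le_one_iff.mpr (by nlinarith)
    exact div_nonneg (by linarith) hs2.le
  have h3 : L (2 * δ) ≤ 0.82 * L δ := le_trans g1 g2
  linarith
end
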